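/- arXiv:1809.03885 — 2 statements merged into one kernel-verified Lean document; each statement's English description precedes it below -/
import Mathlib

section
/- The ex-ante value of the insider's information in the one-period Kyle equilibrium equals σσ_ν/2: let V and ν be independent real Gaussian random variables with V ~ N(0, σ²) and ν ~ N(0, σ_ν²), where σ > 0 and σ_ν > 0, and set β = σ_ν/σ and λ = σ/(2σ_ν). Then the expected equilibrium profit of the insider satisfies E[βV·(V − λ(βV + ν))] = σσ_ν/2. -/
open MeasureTheory ProbabilityTheory Real Set
open scoped NNReal ENNReal

private lemma rpow_two' (x : ℝ) : x ^ (2:ℝ) = x ^ 2 := by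
  rw [show (2:ℝ) = ((2:ℕ):ℝ) by norm_num, Real.rpow_natCast]

private lemma integral_sq_mul_exp_neg_mul_sq {b : ℝ} (hb : 0 < b) :
    ∫ x : ℝ, x ^ 2 * Real.exp (-b * x ^ 2) = Real.sqrt π / 2 * b ^ (-(3:ℝ)/2) := by
  have habs : (∫ x : ℝ, x ^ 2 * Real.exp (-b * x ^ 2))
      = ∫ x : ℝ, (fun y : ℝ => y ^ 2 * Real.exp (-b * y ^ 2)) |x| := by
    congr 1; funext x; simp [sq_abs]
  rw [habs, integral_comp_abs (f := fun y : ℝ => y ^ 2 * Real.exp (-b * y ^ 2))]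
  have h2 : (∫ x in Ioi (0:ℝ), x ^ 2 * Real.exp (-b * x ^ 2))
      = ∫ x in Ioi (0:ℝ), x ^ (2:ℝ) * Real.exp (-b * x ^ (2:ℝ)) := by
    refine setIntegral_congr_fun measurableSet_Ioi fun x hx => ?_
    rw [rpow_two']
  rw [h2, integral_rpow_mul_exp_neg_mul_rpow (by norm_num) (by norm_num) hb]
  have e1 : ((2:ℝ) + 1) / 2 = 1/2 + 1 := by norm_num
  rw [e1, Real.Gamma_add_one (by norm_num), Real.Gamma_one_half_eq]
  have e2 : -((2:ℝ)+1)/2 = -(3:ℝ)/2 := by norm_num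
  rw [e2]; ring

section helpers
variable {v : ℝ≥0}

private lemma integral_gaussianReal_eq (hv : v ≠ 0) (g : ℝ → ℝ) :
    ∫ x, g x ∂(gaussianReal 0 v) = ∫ x, gaussianPDFReal 0 v x * g x := by
  rw [gaussianReal_of_var_ne_zero 0 hv]
  have h : (gaussianPDF 0 v) = fun x => ((Real.toNNReal (gaussianPDFReal 0 v x) : ℝ≥0) : ℝ≥0∞) := rfl
  rw [h, integral_withDensity_eq_integral_smul ((measurable_gaussianPDFReal 0 v).real_toNNReal)]
  refine integral_congr_ae (Filter.Eventually.of_forall fun x => ?_)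
  simp [NNReal.smul_def, Real.coe_toNNReal _ (gaussianPDFReal_nonneg 0 v x)]

private lemma integrable_gaussianReal_iff (hv : v ≠ 0) {g : ℝ → ℝ} :
    Integrable g (gaussianReal 0 v) ↔ Integrable (fun x => gaussianPDFReal 0 v x * g x) := by
  rw [gaussianReal_of_var_ne_zero 0 hv]
  have h : (gaussianPDF 0 v) = fun x => ((Real.toNNReal (gaussianPDFReal 0 v x) : ℝ≥0) : ℝ≥0∞) := rfl
  rw [h, integrable_withDensity_iff_integrable_coe_smul
    ((measurable_gaussianPDFReal 0 v).real_toNNReal)]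
  refine integrable_congr (Filter.Eventually.of_forall fun x => ?_)
  simp [NNReal.smul_def, Real.coe_toNNReal _ (gaussianPDFReal_nonneg 0 v x)]

private lemma pdf_mul_eq (v : ℝ≥0) (g : ℝ → ℝ) (x : ℝ) :
    gaussianPDFReal 0 v x * g x
      = (Real.sqrt (2 * π * v))⁻¹ * (g x * Real.exp (-(2 * (v:ℝ))⁻¹ * x ^ 2)) := by
  rw [gaussianPDFReal]
  have : -(x - 0) ^ 2 / (2 * (v:ℝ)) = -(2 * (v:ℝ))⁻¹ * x ^ 2 := by
    field_simp
    simp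
  rw [this]; ring

private lemma integrable_sq_gaussianReal (hv : v ≠ 0) :
    Integrable (fun x : ℝ => x ^ 2) (gaussianReal 0 v) := by
  rw [integrable_gaussianReal_iff hv]
  have hb : 0 < (2 * (v:ℝ))⁻¹ := by positivity
  have h1 : (fun x : ℝ => gaussianPDFReal 0 v x * x ^ 2)
      = fun x => (Real.sqrt (2 * π * v))⁻¹ * (x ^ 2 * Real.exp (-(2 * (v:ℝ))⁻¹ * x ^ 2)) :=
    funext fun x => pdf_mul_eq v (fun y => y ^ 2) x
  rw [h1]
  refine Integrable.const_mul ?_ _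
  have h := integrable_rpow_mul_exp_neg_mul_sq hb (s := 2) (by norm_num)
  exact h.congr (Filter.Eventually.of_forall fun x => by simp only [rpow_two'])

private lemma integrable_id_gaussianReal (hv : v ≠ 0) :
    Integrable (fun x : ℝ => x) (gaussianReal 0 v) := by
  rw [integrable_gaussianReal_iff hv]
  have hb : 0 < (2 * (v:ℝ))⁻¹ := by positivity
  have h1 : (fun x : ℝ => gaussianPDFReal 0 v x * x)
      = fun x => (Real.sqrt (2 * π * v))⁻¹ * (x * Real.exp (-(2 * (v:ℝ))⁻¹ * x ^ 2)) :=
    funext fun x => pdf_mul_eq v (fun y => y) x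
  rw [h1]
  exact (integrable_mul_exp_neg_mul_sq hb).const_mul _

private lemma integral_id_gaussianReal (hv : v ≠ 0) :
    ∫ x, x ∂(gaussianReal 0 v) = 0 := by
  rw [integral_gaussianReal_eq hv]
  have h1 : (fun x : ℝ => gaussianPDFReal 0 v x * x)
      = fun x => (Real.sqrt (2 * π * v))⁻¹ * (x * Real.exp (-(2 * (v:ℝ))⁻¹ * x ^ 2)) :=
    funext fun x => pdf_mul_eq v (fun y => y) x
  rw [h1, integral_const_mul]
  have hodd : ∫ x : ℝ, x * Real.exp (-(2 * (v:ℝ))⁻¹ * x ^ 2) = 0 := by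
    have h := integral_neg_eq_self (fun x : ℝ => x * Real.exp (-(2 * (v:ℝ))⁻¹ * x ^ 2)) volume
    simp only [neg_sq, neg_mul] at h
    rw [integral_neg] at h
    simp only [neg_mul] at h ⊢
    linarith
  rw [hodd, mul_zero]

private lemma integral_sq_gaussianReal (hv : v ≠ 0) :
    ∫ x, x ^ 2 ∂(gaussianReal 0 v) = (v : ℝ) := by
  rw [integral_gaussianReal_eq hv]
  have hv' : (0:ℝ) < (v:ℝ) := by positivity
  have hb : 0 < (2 * (v:ℝ))⁻¹ := by positivity
  have h1 : (fun x : ℝ => gaussianPDFReal 0 v x * x ^ 2)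
      = fun x => (Real.sqrt (2 * π * v))⁻¹ * (x ^ 2 * Real.exp (-(2 * (v:ℝ))⁻¹ * x ^ 2)) :=
    funext fun x => pdf_mul_eq v (fun y => y ^ 2) x
  rw [h1, integral_const_mul, integral_sq_mul_exp_neg_mul_sq hb]
  have e1 : ((2 * (v:ℝ))⁻¹) ^ (-(3:ℝ)/2) = (2 * (v:ℝ)) ^ ((3:ℝ)/2) := by
    rw [show -(3:ℝ)/2 = -((3:ℝ)/2) by norm_num, Real.rpow_neg (by positivity),
      Real.inv_rpow (by positivity), inv_inv]
  have e2 : (2 * (v:ℝ)) ^ ((3:ℝ)/2) = (2 * (v:ℝ)) * Real.sqrt (2 * (v:ℝ)) := by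
    rw [show ((3:ℝ)/2) = 1 + 1/2 by norm_num, Real.rpow_add (by positivity), Real.rpow_one,
      ← Real.sqrt_eq_rpow]
  have e3 : Real.sqrt (2 * π * (v:ℝ)) = Real.sqrt π * Real.sqrt (2 * (v:ℝ)) := by
    rw [← Real.sqrt_mul (by positivity)]
    ring_nf
  rw [e1, e2, e3]
  have hπ : Real.sqrt π ≠ 0 := by positivity
  have hsv : Real.sqrt (2 * (v:ℝ)) ≠ 0 := by positivity
  field_simp

/-- **Ex-ante value of the insider's information in the one-period Kyle equilibrium.**
Let `V` and `ν` be independent real Gaussian random variables with `V ~ N(0, σ²)` and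
`ν ~ N(0, σν²)`, where `σ > 0` and `σν > 0`, and set `β = σν/σ`, `λ = σ/(2σν)`.  Then the
expected equilibrium profit of the insider satisfies
`E[β V (V − λ(β V + ν))] = σ σν / 2`. -/
theorem kyle_one_period_value_of_information
    {Ω : Type*} {mΩ : MeasurableSpace Ω} {μ : Measure Ω} [IsProbabilityMeasure μ]
    (σ σν : ℝ) (hσ : 0 < σ) (hσν : 0 < σν)
    (V ν : Ω → ℝ) (hV : Measurable V) (hν : Measurable ν)
    (hVlaw : μ.map V = gaussianReal 0 (Real.toNNReal (σ ^ 2)))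
    (hνlaw : μ.map ν = gaussianReal 0 (Real.toNNReal (σν ^ 2)))
    (hindep : IndepFun V ν μ)
    (β lam : ℝ) (hβ : β = σν / σ) (hlam : lam = σ / (2 * σν)) :
    ∫ ω, β * V ω * (V ω - lam * (β * V ω + ν ω)) ∂μ = σ * σν / 2 := by
  have hv1 : Real.toNNReal (σ ^ 2) ≠ 0 := by
    simp [Real.toNNReal_eq_zero, not_le]; positivity
  have hv2 : Real.toNNReal (σν ^ 2) ≠ 0 := by
    simp [Real.toNNReal_eq_zero, not_le]; positivity
  -- integrability of V^2
  have hIntV2 : Integrable (fun ω => V ω ^ 2) μ := by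
    have h := integrable_sq_gaussianReal hv1
    rw [← hVlaw, integrable_map_measure (by fun_prop) hV.aemeasurable] at h
    exact h
  have hIntV : Integrable V μ := by
    have h := integrable_id_gaussianReal hv1
    rw [← hVlaw] at h
    exact (integrable_map_measure aestronglyMeasurable_id hV.aemeasurable).1 h
  have hIntν : Integrable ν μ := by
    have h := integrable_id_gaussianReal hv2
    rw [← hνlaw] at h
    exact (integrable_map_measure aestronglyMeasurable_id hν.aemeasurable).1 h
  have hIntVν : Integrable (fun ω => V ω * ν ω) μ := hindep.integrable_mul hIntV hIntν
  -- moments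
  have hEV2 : ∫ ω, V ω ^ 2 ∂μ = σ ^ 2 := by
    have h := integral_sq_gaussianReal hv1
    rw [← hVlaw] at h
    have h2 : ∫ ω, V ω ^ 2 ∂μ = ∫ x, x ^ 2 ∂(Measure.map V μ) :=
      (integral_map hV.aemeasurable (measurable_id.pow_const 2).aestronglyMeasurable).symm
    rw [h2, h, Real.coe_toNNReal _ (sq_nonneg σ)]
  have hEν : ∫ ω, ν ω ∂μ = 0 := by
    have h := integral_id_gaussianReal hv2
    rw [← hνlaw] at h
    have h2 : ∫ ω, ν ω ∂μ = ∫ x, x ∂(Measure.map ν μ) :=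
      (integral_map hν.aemeasurable aestronglyMeasurable_id).symm
    rw [h2]; exact h
  have hEVν : ∫ ω, V ω * ν ω ∂μ = 0 := by
    have h := hindep.integral_mul_eq_mul_integral hV.aestronglyMeasurable hν.aestronglyMeasurable
    simpa [Pi.mul_apply, hEν] using h
  have hsplit : (fun ω => β * V ω * (V ω - lam * (β * V ω + ν ω)))
      = fun ω => (β - lam * β ^ 2) * V ω ^ 2 + (-(lam * β)) * (V ω * ν ω) := by
    funext ω; ring
  rw [hsplit, integral_add ((hIntV2.const_mul _)) ((hIntVν.const_mul _)),
    integral_const_mul, integral_const_mul, hEV2, hEVν, mul_zero, add_zero, hβ, hlam]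
  field_simp
  ring
end helpers
end

section
/- The auxiliary value function Ψ^a solves the backward heat equation: let H ∈ C^{1,2}([0,1) × ℝ) satisfy H_t + ½H_{yy} = 0 on [0,1) × ℝ, suppose that for each t ∈ [0,1) the map y ↦ H(t,y) is strictly increasing with range ℝ, let a ∈ ℝ, let ξ(t,a) be the unique solution of H(t, ξ(t,a)) = a, and assume s ↦ H_y(s, ξ(s,a)) is integrable on [t,1] for each t ∈ [0,1). Define Ψ^a(t,x) = ∫_{ξ(t,a)}^x (H(t,u) − a) du + ½∫_t^1 H_y(s, ξ(s,a)) ds. Then on [0,1) × ℝ: (i) Ψ^a_x(t,x) = H(t,x) − a; (ii) Ψ^a_{xx}(t,x) = H_x(t,x); and (iii) Ψ^a_t(t,x) + ½Ψ^a_{xx}(t,x) = 0. -/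
open Set MeasureTheory Filter Topology

private lemma sliceContT {F : ℝ → ℝ → ℝ}
    (hF : ContinuousOn (fun p : ℝ × ℝ => F p.1 p.2) (Ico (0:ℝ) 1 ×ˢ univ)) (y : ℝ) :
    ContinuousOn (fun s => F s y) (Ico (0:ℝ) 1) :=
  hF.comp (continuous_id.prodMk continuous_const).continuousOn (fun s hs => ⟨hs, trivial⟩)

private lemma sliceContX {F : ℝ → ℝ → ℝ}
    (hF : ContinuousOn (fun p : ℝ × ℝ => F p.1 p.2) (Ico (0:ℝ) 1 ×ˢ univ)) {s : ℝ}
    (hs : s ∈ Ico (0:ℝ) 1) : Continuous (fun u => F s u) :=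
  hF.comp_continuous (continuous_const.prodMk continuous_id) (fun u => ⟨hs, trivial⟩)

private lemma aux_ftc2_le {f f' : ℝ → ℝ} {t τ : ℝ} (ht : t ∈ Ico (0:ℝ) 1) (hτ : τ ∈ Ico (0:ℝ) 1)
    (hcont : ContinuousOn f (Ico (0:ℝ) 1))
    (hd : ∀ s ∈ Ioo (0:ℝ) 1, HasDerivAt f (f' s) s)
    (hcont' : ContinuousOn f' (Ico (0:ℝ) 1)) (h : t ≤ τ) :
    ∫ s in t..τ, f' s = f τ - f t := by
  have hsub : Icc t τ ⊆ Ico (0:ℝ) 1 := fun s hs => ⟨le_trans ht.1 hs.1, lt_of_le_of_lt hs.2 hτ.2⟩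
  refine intervalIntegral.integral_eq_sub_of_hasDeriv_right_of_le h (hcont.mono hsub)
    (fun s hs => (hd s ⟨lt_of_le_of_lt ht.1 hs.1, hs.2.trans hτ.2⟩).hasDerivWithinAt) ?_
  apply ContinuousOn.intervalIntegrable
  rw [uIcc_of_le h]
  exact hcont'.mono hsub

private lemma aux_ftc2 {f f' : ℝ → ℝ} {t τ : ℝ} (ht : t ∈ Ico (0:ℝ) 1) (hτ : τ ∈ Ico (0:ℝ) 1)
    (hcont : ContinuousOn f (Ico (0:ℝ) 1))
    (hd : ∀ s ∈ Ioo (0:ℝ) 1, HasDerivAt f (f' s) s)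
    (hcont' : ContinuousOn f' (Ico (0:ℝ) 1)) :
    ∫ s in t..τ, f' s = f τ - f t := by
  rcases le_total t τ with h | h
  · exact aux_ftc2_le ht hτ hcont hd hcont' h
  · rw [intervalIntegral.integral_symm, aux_ftc2_le hτ ht hcont hd hcont' h]
    ring

private lemma aux_ftc1 {f : ℝ → ℝ} {t : ℝ} (ht : t ∈ Ico (0:ℝ) 1)
    (hcont : ContinuousOn f (Ico (0:ℝ) 1)) :
    HasDerivWithinAt (fun τ => ∫ s in t..τ, f s) (f t) (Ico (0:ℝ) 1) t := by
  have hIco : MeasurableSet (Ico (0:ℝ) 1) := measurableSet_Ico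
  rcases eq_or_lt_of_le ht.1 with h0 | h0
  · -- t = 0
    have hmem : Ico (0:ℝ) 1 ∈ 𝓝[>] t := by
      rw [← h0]
      exact nhdsWithin_mono _ Ioi_subset_Ici_self (Ico_mem_nhdsGE (by norm_num))
    have hd := intervalIntegral.integral_hasDerivWithinAt_right (f := f)
      (a := t) (b := t) (s := Ici t) (t := Ioi t)
      IntervalIntegrable.refl
      ⟨Ico (0:ℝ) 1, hmem, hcont.aestronglyMeasurable hIco⟩
      ((hcont t ht).mono_of_mem_nhdsWithin hmem)
    exact hd.mono (fun s hs => h0 ▸ hs.1)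
  · have hmem : Ico (0:ℝ) 1 ∈ 𝓝 t := Ico_mem_nhds h0 ht.2
    exact (intervalIntegral.integral_hasDerivAt_right IntervalIntegrable.refl
      ⟨Ico (0:ℝ) 1, hmem, hcont.aestronglyMeasurable hIco⟩
      ((hcont t ht).continuousAt hmem)).hasDerivWithinAt

/-- **The auxiliary value function `Ψᵃ` of the insider solves the backward heat
equation.**  Let `H ∈ C^{1,2}([0,1) × ℝ)` (with time derivative `Ht`, space derivatives
`Hy`, `Hyy`, all continuous on `[0,1) × ℝ`) satisfy `H_t + ½ H_{yy} = 0`, let each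
`H(t,·)` be strictly increasing with range `ℝ`, let `ξ(t)` be the unique solution of
`H(t, ξ(t)) = a`, and assume `s ↦ H_y(s, ξ(s))` is interval integrable on `[t,1]` for each
`t ∈ [0,1)`.  Define `Ψᵃ(t,x) = ∫_{ξ(t)}^x (H(t,u) − a) du + ½ ∫_t^1 H_y(s, ξ(s)) ds`.
Then on `[0,1) × ℝ`:  (i) `Ψᵃ_x = H − a`;  (ii) `Ψᵃ_{xx} = H_y`;  and
(iii) `Ψᵃ_t + ½ Ψᵃ_{xx} = 0`. -/
theorem kyle_value_function_solves_hjb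
    (H Ht Hy Hyy : ℝ → ℝ → ℝ) (a : ℝ)
    (hHt : ∀ t ∈ Ico (0:ℝ) 1, ∀ y : ℝ,
      HasDerivWithinAt (fun τ => H τ y) (Ht t y) (Ico (0:ℝ) 1) t)
    (hHy : ∀ t ∈ Ico (0:ℝ) 1, ∀ y : ℝ, HasDerivAt (fun u => H t u) (Hy t y) y)
    (hHyy : ∀ t ∈ Ico (0:ℝ) 1, ∀ y : ℝ, HasDerivAt (fun u => Hy t u) (Hyy t y) y)
    (hHcont : ContinuousOn (fun p : ℝ × ℝ => H p.1 p.2) (Ico (0:ℝ) 1 ×ˢ univ))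
    (hHtcont : ContinuousOn (fun p : ℝ × ℝ => Ht p.1 p.2) (Ico (0:ℝ) 1 ×ˢ univ))
    (hHycont : ContinuousOn (fun p : ℝ × ℝ => Hy p.1 p.2) (Ico (0:ℝ) 1 ×ˢ univ))
    (hHyycont : ContinuousOn (fun p : ℝ × ℝ => Hyy p.1 p.2) (Ico (0:ℝ) 1 ×ˢ univ))
    (hheat : ∀ t ∈ Ico (0:ℝ) 1, ∀ y : ℝ, Ht t y + (1 / 2) * Hyy t y = 0)
    (hmono : ∀ t ∈ Ico (0:ℝ) 1, StrictMono (H t))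
    (hsurj : ∀ t ∈ Ico (0:ℝ) 1, Function.Surjective (H t))
    (ξ : ℝ → ℝ) (hξ : ∀ t ∈ Ico (0:ℝ) 1, H t (ξ t) = a)
    (hint : ∀ t ∈ Ico (0:ℝ) 1, IntervalIntegrable (fun s => Hy s (ξ s)) volume t 1)
    (Ψ : ℝ → ℝ → ℝ)
    (hΨ : ∀ t ∈ Ico (0:ℝ) 1, ∀ x : ℝ,
      Ψ t x = (∫ u in ξ t..x, (H t u - a)) + (1 / 2) * ∫ s in t..(1:ℝ), Hy s (ξ s)) :
    ∀ t ∈ Ico (0:ℝ) 1, ∀ x : ℝ,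
      HasDerivAt (fun u => Ψ t u) (H t x - a) x ∧
      HasDerivAt (fun u => H t u - a) (Hy t x) x ∧
      ∃ d : ℝ, HasDerivWithinAt (fun τ => Ψ τ x) d (Ico (0:ℝ) 1) t ∧
        d + (1 / 2) * Hy t x = 0 := by
  intro t ht x
  have hc : H t (ξ t) = a := hξ t ht
  -- continuity of each `H s ·`
  have hHcontu : ∀ s ∈ Ico (0:ℝ) 1, Continuous (fun u => H s u) := fun s hs =>
    sliceContX hHcont hs
  refine ⟨?_, (hHy t ht x).sub_const a, ?_⟩
  · -- part (i)
    have hfun : (fun u => Ψ t u)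
        = fun u => (∫ u' in ξ t..u, (H t u' - a)) + (1 / 2) * ∫ s in t..(1:ℝ), Hy s (ξ s) :=
      funext (hΨ t ht)
    rw [hfun]
    have hci : Continuous (fun u => H t u - a) := (hHcontu t ht).sub continuous_const
    exact (intervalIntegral.integral_hasDerivAt_right (hci.intervalIntegrable _ _)
      (hci.stronglyMeasurableAtFilter _ _) hci.continuousAt).add_const _
  -- part (iii)
  -- continuity of ξ
  have hξcont : ∀ s ∈ Ico (0:ℝ) 1, ContinuousWithinAt ξ (Ico (0:ℝ) 1) s := by
    intro s hs
    refine tendsto_order.2 ⟨?_, ?_⟩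
    · intro l hl
      have h1 : H s l < a := by rw [← hξ s hs]; exact hmono s hs hl
      have h2 := ((sliceContT hHcont l) s hs).eventually_lt_const h1
      filter_upwards [h2, self_mem_nhdsWithin] with τ hτ1 hτ2
      exact (hmono τ hτ2).lt_iff_lt.mp (by rw [hξ τ hτ2]; exact hτ1)
    · intro u hu
      have h1 : a < H s u := by rw [← hξ s hs]; exact hmono s hs hu
      have h2 := ((sliceContT hHcont u) s hs).eventually_const_lt h1
      filter_upwards [h2, self_mem_nhdsWithin] with τ hτ1 hτ2
      exact (hmono τ hτ2).lt_iff_lt.mp (by rw [hξ τ hτ2]; exact hτ1)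
  have hξconton : ContinuousOn ξ (Ico (0:ℝ) 1) := hξcont
  have hHyξ : ContinuousOn (fun s => Hy s (ξ s)) (Ico (0:ℝ) 1) :=
    hHycont.comp (continuousOn_id.prodMk hξconton) (fun s hs => ⟨hs, trivial⟩)
  have hgcont : ContinuousOn (fun s => -(1/2 : ℝ) * (Hy s x - Hy s (ξ t))) (Ico (0:ℝ) 1) :=
    continuousOn_const.mul ((sliceContT hHycont x).sub (sliceContT hHycont (ξ t)))
  -- continuity of P on Ico 0 1
  have hPcont : ContinuousOn (fun s => ∫ u in ξ t..x, (H s u - a)) (Ico (0:ℝ) 1) := by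
    intro σ hσ
    set m := (σ + 1) / 2 with hm
    have hσm : σ < m := by simp only [hm]; linarith [hσ.2]
    have hm0 : (0:ℝ) ≤ m := by simp only [hm]; linarith [hσ.1]
    have hm1 : m < 1 := by simp only [hm]; linarith [hσ.2]
    set ρ : ℝ → ℝ := fun s => max 0 (min s m) with hρ
    have hρcont : Continuous ρ := continuous_const.max (continuous_id.min continuous_const)
    have hρmem : ∀ s, ρ s ∈ Ico (0:ℝ) 1 := fun s =>
      ⟨le_max_left _ _, lt_of_le_of_lt (max_le hm0 (min_le_right s m)) hm1⟩
    have hHcl : Continuous (Function.uncurry (fun s u => H (ρ s) u - a)) := by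
      have : Continuous (fun p : ℝ × ℝ => H (ρ p.1) p.2) :=
        hHcont.comp_continuous ((hρcont.comp continuous_fst).prodMk continuous_snd)
          (fun p => ⟨hρmem _, trivial⟩)
      exact this.sub continuous_const
    have hPc : Continuous (fun s => ∫ u in ξ t..x, (H (ρ s) u - a)) :=
      intervalIntegral.continuous_parametric_intervalIntegral_of_continuous' hHcl _ _
    have heq : ∀ s ∈ Icc (0:ℝ) m,
        (∫ u in ξ t..x, (H s u - a)) = ∫ u in ξ t..x, (H (ρ s) u - a) := by
      intro s hs
      have : ρ s = s := by
        simp only [hρ]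
        rw [min_eq_left hs.2, max_eq_right hs.1]
      rw [this]
    have hmem' : Icc (0:ℝ) m ∈ 𝓝[Ico (0:ℝ) 1] σ := by
      refine mem_of_superset
        (inter_mem self_mem_nhdsWithin (mem_nhdsWithin_of_mem_nhds (Iic_mem_nhds hσm))) ?_
      rintro y ⟨hy1, hy2⟩
      exact ⟨hy1.1, hy2⟩
    exact ((hPc.continuousWithinAt.congr heq (heq σ ⟨hσ.1, hσm.le⟩)).mono_of_mem_nhdsWithin hmem')
  -- derivative of P at interior points
  have hPd : ∀ s ∈ Ioo (0:ℝ) 1, HasDerivAt (fun σ => ∫ u in ξ t..x, (H σ u - a))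
      (-(1/2 : ℝ) * (Hy s x - Hy s (ξ t))) s := by
    intro s hs
    have hs' : s ∈ Ico (0:ℝ) 1 := ⟨hs.1.le, hs.2⟩
    set ε := min s (1 - s) / 2 with hε
    have hmin : 0 < min s (1 - s) := lt_min hs.1 (by linarith [hs.2])
    have hε0 : 0 < ε := by positivity
    have hKsub : Icc (s - ε) (s + ε) ×ˢ uIcc (ξ t) x ⊆ Ico (0:ℝ) 1 ×ˢ univ := by
      rintro ⟨p1, p2⟩ ⟨hp1, _⟩
      refine ⟨⟨?_, ?_⟩, trivial⟩
      · have := min_le_left s (1 - s); have := hp1.1; simp only [hε] at *; linarith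
      · have := min_le_right s (1 - s); have := hp1.2; simp only [hε] at *; linarith
    obtain ⟨C, hC⟩ := (isCompact_Icc.prod isCompact_uIcc).exists_bound_of_continuousOn
      (hHtcont.mono hKsub)
    have hballIoo : Metric.ball s ε ⊆ Ioo (0:ℝ) 1 := by
      intro y hy
      rw [Metric.mem_ball, Real.dist_eq, abs_lt] at hy
      constructor
      · have := min_le_left s (1 - s); simp only [hε] at *; linarith
      · have := min_le_right s (1 - s); simp only [hε] at *; linarith
    have key := (intervalIntegral.hasDerivAt_integral_of_dominated_loc_of_deriv_le
      (F := fun σ u => H σ u - a) (F' := fun σ u => Ht σ u) (x₀ := s)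
      (a := ξ t) (b := x) (μ := volume) (bound := fun _ => C) (Metric.ball_mem_nhds s hε0) ?_ ?_ ?_ ?_ ?_ ?_).2
    · have hint2 : (∫ u in ξ t..x, Ht s u) = -(1/2 : ℝ) * (Hy s x - Hy s (ξ t)) := by
        have h1 : ∀ u ∈ uIcc (ξ t) x,
            HasDerivAt (fun u => -(1/2 : ℝ) * Hy s u) (Ht s u) u := by
          intro u _
          have h2 := (hHyy s hs' u).const_mul (-(1/2 : ℝ))
          have heq : -(1/2 : ℝ) * Hyy s u = Ht s u := by have := hheat s hs' u; linarith
          rwa [heq] at h2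
        have h2 : Continuous (fun u => Ht s u) := sliceContX hHtcont hs'
        rw [intervalIntegral.integral_eq_sub_of_hasDerivAt h1 (h2.intervalIntegrable _ _)]
        ring
      rwa [hint2] at key
    · filter_upwards [Ioo_mem_nhds hs.1 hs.2] with σ hσ
      exact (((hHcontu σ ⟨hσ.1.le, hσ.2⟩).sub continuous_const)).aestronglyMeasurable
    · exact (((hHcontu s hs').sub continuous_const)).intervalIntegrable _ _
    · exact (sliceContX hHtcont hs').aestronglyMeasurable
    · refine ae_of_all _ fun u hu σ hσ => ?_
      have hσ' : σ ∈ Icc (s - ε) (s + ε) := by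
        rw [Metric.mem_ball, Real.dist_eq, abs_lt] at hσ
        constructor <;> linarith [hσ.1, hσ.2]
      have hu' : u ∈ uIcc (ξ t) x := by
        rcases mem_uIoc.mp hu with ⟨h1, h2⟩ | ⟨h1, h2⟩
        · exact ⟨le_trans (min_le_left _ _) h1.le, le_trans h2 (le_max_right _ _)⟩
        · exact ⟨le_trans (min_le_right _ _) h1.le, le_trans h2 (le_max_left _ _)⟩
      exact hC (σ, u) ⟨hσ', hu'⟩
    · exact intervalIntegrable_const
    · refine ae_of_all _ fun u hu σ hσ => ?_
      have hσI : σ ∈ Ioo (0:ℝ) 1 := hballIoo hσ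
      have hmem : Ico (0:ℝ) 1 ∈ 𝓝 σ := Ico_mem_nhds hσI.1 hσI.2
      exact ((hHt σ ⟨hσI.1.le, hσI.2⟩ u).hasDerivAt hmem).sub_const a
  -- P increment identity
  have hPid : ∀ τ ∈ Ico (0:ℝ) 1, (∫ u in ξ t..x, (H τ u - a))
      = (∫ u in ξ t..x, (H t u - a)) + ∫ s in t..τ, -(1/2 : ℝ) * (Hy s x - Hy s (ξ t)) := by
    intro τ hτ
    have := aux_ftc2 ht hτ hPcont hPd hgcont
    linarith
  -- derivative of E is zero
  have hEd : HasDerivWithinAt (fun τ => ∫ u in ξ t..ξ τ, (H τ u - a)) 0 (Ico (0:ℝ) 1) t := by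
    rw [hasDerivWithinAt_iff_tendsto_slope]
    have hslope : Tendsto (fun τ => |slope (fun σ => H σ (ξ t)) t τ|)
        (𝓝[Ico (0:ℝ) 1 \ {t}] t) (𝓝 |Ht t (ξ t)|) :=
      (hasDerivWithinAt_iff_tendsto_slope.mp (hHt t ht (ξ t))).abs
    have hξt : Tendsto (fun τ => |ξ τ - ξ t|) (𝓝[Ico (0:ℝ) 1 \ {t}] t) (𝓝 0) := by
      have h := ((hξcont t ht).mono_left (nhdsWithin_mono t (diff_subset : Ico (0:ℝ) 1 \ {t} ⊆ Ico 0 1))).sub_const (ξ t)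
      simpa using h.abs
    have hlim : Tendsto (fun τ => |slope (fun σ => H σ (ξ t)) t τ| * |ξ τ - ξ t|)
        (𝓝[Ico (0:ℝ) 1 \ {t}] t) (𝓝 0) := by
      simpa using hslope.mul hξt
    refine squeeze_zero_norm' ?_ hlim
    filter_upwards [self_mem_nhdsWithin] with τ hτ
    obtain ⟨hτI, hτne⟩ := hτ
    rw [mem_singleton_iff] at hτne
    have hEτ : |∫ u in ξ t..ξ τ, (H τ u - a)| ≤ |H τ (ξ t) - a| * |ξ τ - ξ t| := by
      have hb : ∀ u ∈ uIoc (ξ t) (ξ τ), ‖H τ u - a‖ ≤ |H τ (ξ t) - a| := by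
        intro u hu
        rcases mem_uIoc.mp hu with ⟨h1, h2⟩ | ⟨h1, h2⟩
        · have l1 : H τ (ξ t) ≤ H τ u := (hmono τ hτI).monotone h1.le
          have l2 : H τ u ≤ a := by rw [← hξ τ hτI]; exact (hmono τ hτI).monotone h2
          have e1 : |H τ u - a| = -(H τ u - a) := abs_of_nonpos (by linarith)
          have e2 : -(H τ (ξ t) - a) ≤ |H τ (ξ t) - a| := neg_le_abs _
          rw [Real.norm_eq_abs, e1]; linarith
        · have l1 : a ≤ H τ u := by rw [← hξ τ hτI]; exact (hmono τ hτI).monotone h1.le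
          have l2 : H τ u ≤ H τ (ξ t) := (hmono τ hτI).monotone h2
          have e1 : |H τ u - a| = H τ u - a := abs_of_nonneg (by linarith)
          have e2 : H τ (ξ t) - a ≤ |H τ (ξ t) - a| := le_abs_self _
          rw [Real.norm_eq_abs, e1]; linarith
      have := intervalIntegral.norm_integral_le_of_norm_le_const hb
      rwa [Real.norm_eq_abs] at this
    have h3 : (0:ℝ) < |τ - t| := abs_pos.2 (sub_ne_zero.2 hτne)
    have h4 : ‖slope (fun τ => ∫ u in ξ t..ξ τ, (H τ u - a)) t τ‖
        = |∫ u in ξ t..ξ τ, (H τ u - a)| / |τ - t| := by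
      rw [Real.norm_eq_abs, slope_def_field, abs_div]
      congr 2
      simp
    have h5 : |slope (fun σ => H σ (ξ t)) t τ| = |H τ (ξ t) - a| / |τ - t| := by
      rw [slope_def_field, abs_div, hc]
    rw [h4, h5]
    calc |∫ u in ξ t..ξ τ, (H τ u - a)| / |τ - t|
        ≤ (|H τ (ξ t) - a| * |ξ τ - ξ t|) / |τ - t| := by gcongr
      _ = |H τ (ξ t) - a| / |τ - t| * |ξ τ - ξ t| := by ring
  -- derivatives of the time integrals
  have hgd : HasDerivWithinAt (fun τ => ∫ s in t..τ, -(1/2 : ℝ) * (Hy s x - Hy s (ξ t)))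
      (-(1/2 : ℝ) * (Hy t x - Hy t (ξ t))) (Ico (0:ℝ) 1) t := aux_ftc1 ht hgcont
  have hI2d : HasDerivWithinAt (fun τ => ∫ s in t..τ, Hy s (ξ s)) (Hy t (ξ t))
      (Ico (0:ℝ) 1) t := aux_ftc1 ht hHyξ
  -- assemble φ and its derivative
  have hφd : HasDerivWithinAt (fun τ =>
      ((∫ u in ξ t..x, (H t u - a)) + ∫ s in t..τ, -(1/2 : ℝ) * (Hy s x - Hy s (ξ t)))
        - (∫ u in ξ t..ξ τ, (H τ u - a))
        + (1/2 : ℝ) * ((∫ s in t..(1:ℝ), Hy s (ξ s)) - ∫ s in t..τ, Hy s (ξ s)))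
      ((0 + -(1/2 : ℝ) * (Hy t x - Hy t (ξ t)) - 0) + (1/2 : ℝ) * (0 - Hy t (ξ t)))
      (Ico (0:ℝ) 1) t := by
    exact (((hasDerivWithinAt_const t _ _).add hgd).sub hEd).add
      (((hasDerivWithinAt_const t _ _).sub hI2d).const_mul (1/2 : ℝ))
  -- Ψ agrees with φ on Ico 0 1
  have hcongr : ∀ τ ∈ Ico (0:ℝ) 1, Ψ τ x =
      ((∫ u in ξ t..x, (H t u - a)) + ∫ s in t..τ, -(1/2 : ℝ) * (Hy s x - Hy s (ξ t)))
        - (∫ u in ξ t..ξ τ, (H τ u - a))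
        + (1/2 : ℝ) * ((∫ s in t..(1:ℝ), Hy s (ξ s)) - ∫ s in t..τ, Hy s (ξ s)) := by
    intro τ hτ
    rw [hΨ τ hτ x]
    have hHτc : Continuous (fun u => H τ u - a) := (hHcontu τ hτ).sub continuous_const
    have h1 := intervalIntegral.integral_add_adjacent_intervals
      (a := ξ τ) (b := ξ t) (c := x) (f := fun u => H τ u - a) (μ := volume)
      (hHτc.intervalIntegrable _ _) (hHτc.intervalIntegrable _ _)
    have h2 : (∫ u in ξ τ..ξ t, (H τ u - a)) = -∫ u in ξ t..ξ τ, (H τ u - a) :=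
      intervalIntegral.integral_symm _ _
    have hττ : IntervalIntegrable (fun s => Hy s (ξ s)) volume t τ := by
      have hm : min t τ ∈ Ico (0:ℝ) 1 :=
        ⟨le_min ht.1 hτ.1, lt_of_le_of_lt (min_le_left _ _) ht.2⟩
      refine (hint _ hm).mono_set ?_
      intro s hs
      have hs' : s ∈ Icc (t ⊓ τ) (t ⊔ τ) := hs
      have h1 : min t τ ≤ (1:ℝ) := le_trans (min_le_left _ _) ht.2.le
      rw [uIcc_of_le h1]
      exact ⟨hs'.1, le_trans hs'.2 (sup_le ht.2.le hτ.2.le)⟩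
    have h3 : (∫ s in τ..(1:ℝ), Hy s (ξ s))
        = (∫ s in t..(1:ℝ), Hy s (ξ s)) - ∫ s in t..τ, Hy s (ξ s) :=
      (intervalIntegral.integral_interval_sub_left (hint t ht) hττ).symm
    rw [h3, ← hPid τ hτ]
    linarith
  refine ⟨-(1/2 : ℝ) * Hy t x, ?_, by ring⟩
  have hfinal := hφd.congr hcongr (hcongr t ht)
  have e : -(1/2 : ℝ) * Hy t x = (0 + -(1/2 : ℝ) * (Hy t x - Hy t (ξ t)) - 0) + (1/2 : ℝ) * (0 - Hy t (ξ t)) := by ring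
  rw [e]
  exact hfinal
end
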